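/- Let G be a tree, γ an automorphism of G, and A a nonempty connected set of vertices of G with γ(A) = A. Let v be a vertex with v ∉ A and let u ∈ A be the gate of v in A. If γ(u) ≠ u, then dist(v, γ(v)) = 2 · dist(v, A) + dist(u, γ(u)), where dist(v,A) is the minimum of dist(v,a) over a ∈ A. -/

import Mathlib

open SimpleGraph Walk

/-- `u` is the gate of `v` in the set `S` of vertices of the graph `G`
(the paper's "vertex of departure"). -/
def IsGate {V : Type*} (G : SimpleGraph V) (S : Set V) (v u : V) : Prop :=
  u ∈ S ∧ ∀ s ∈ S, G.dist v s = G.dist v u + G.dist u s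

/-- In a tree, every path between two vertices has length equal to the distance. -/
lemma tree_path_length {V : Type*} {G : SimpleGraph V} (hT : G.IsTree) {a b : V}
    (p : G.Walk a b) (hp : p.IsPath) : p.length = G.dist a b := by
  obtain ⟨q, hq, hlen⟩ := hT.isConnected.exists_path_of_dist a b
  obtain ⟨r, -, hr⟩ := hT.existsUnique_path a b
  rw [hr p hp, ← hr q hq, hlen]

/-- In a tree, a vertex on a path between `a` and `b` splits the distance. -/
lemma tree_dist_add {V : Type*} [DecidableEq V] {G : SimpleGraph V} (hT : G.IsTree) {a b : V}
    {p : G.Walk a b} (hp : p.IsPath) {x : V} (hx : x ∈ p.support) :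
    G.dist a x + G.dist x b = G.dist a b := by
  rw [← tree_path_length hT _ (hp.takeUntil hx), ← tree_path_length hT _ (hp.dropUntil hx),
    ← tree_path_length hT p hp, ← Walk.length_append, Walk.take_spec]

lemma isPath_append' {V : Type*} {G : SimpleGraph V} {a b c : V}
    {p : G.Walk a b} {q : G.Walk b c} (hp : p.IsPath) (hq : q.IsPath)
    (h : ∀ x ∈ p.support, x ∈ q.support → x = b) : (p.append q).IsPath := by
  rw [Walk.isPath_def, Walk.support_append]
  have hq' := hq.support_nodup
  rw [Walk.support_eq_cons] at hq'
  refine List.Nodup.append hp.support_nodup hq'.of_cons ?_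
  intro x hx hx'
  have hxq : x ∈ q.support := List.mem_of_mem_tail hx'
  have hxb := h x hx hxq
  subst hxb
  exact (List.nodup_cons.mp hq').1 hx'

/-- If `γ` is an automorphism of a tree `G` stabilizing a nonempty connected set
of vertices `A`, `v ∉ A` has gate `u` in `A`, and `γ u ≠ u`, then
`dist v (γ v) = 2 * dist(v, A) + dist u (γ u)`. -/
theorem dist_to_translate_of_gate_moved {V : Type*} (G : SimpleGraph V) (hT : G.IsTree)
    (γ : G ≃g G) (A : Set V) (hA : A.Nonempty) (hAconn : (G.induce A).Connected)
    (hγA : ⇑γ '' A = A) (v : V) (hv : v ∉ A) (u : V) (hu : IsGate G A v u)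
    (hne : γ u ≠ u) :
    G.dist v (γ v) = 2 * sInf (G.dist v '' A) + G.dist u (γ u) := by
  classical
  have hc := hT.isConnected
  have dcomm : ∀ a b : V, G.dist a b = G.dist b a := fun a b => SimpleGraph.dist_comm
  -- the isomorphism preserves distances
  have iso_dist : ∀ a b : V, G.dist (γ a) (γ b) = G.dist a b := by
    have key : ∀ (δ : G ≃g G) (a b : V), G.dist (δ a) (δ b) ≤ G.dist a b := by
      intro δ a b
      obtain ⟨p, hp, hlen⟩ := hc.exists_path_of_dist a b
      calc G.dist (δ a) (δ b) ≤ (p.map δ.toHom).length := G.dist_le _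
        _ = G.dist a b := by rw [Walk.length_map, hlen]
    intro a b
    refine le_antisymm (key γ a b) ?_
    have := key γ.symm (γ a) (γ b)
    simpa using this
  have hγu : γ u ∈ A := hγA ▸ ⟨u, hu.1, rfl⟩
  -- the infimum of distances to A is the distance to the gate
  have hinf : sInf (G.dist v '' A) = G.dist v u := by
    refine le_antisymm (Nat.sInf_le ⟨u, hu.1, rfl⟩) (le_csInf (hA.image _) ?_)
    rintro _ ⟨s, hs, rfl⟩
    rw [hu.2 s hs]
    omega
  -- γ u is the gate of γ v
  have hgate2 : IsGate G A (γ v) (γ u) := by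
    refine ⟨hγu, ?_⟩
    intro s hs
    obtain ⟨t, ht, rfl⟩ := (by rw [hγA]; exact hs : s ∈ ⇑γ '' A)
    rw [iso_dist, iso_dist, iso_dist]
    exact hu.2 t ht
  have hl0 : G.dist u (γ u) ≠ 0 := fun h0 => hne (((hc.dist_eq_zero_iff).mp h0).symm)
  -- a geodesic from v to u
  obtain ⟨p1, hp1, hlen1⟩ := hc.exists_path_of_dist v u
  -- a path from u to γ u inside A
  obtain ⟨w⟩ := hAconn ⟨u, hu.1⟩ ⟨γ u, hγu⟩
  set w' : G.Walk u (γ u) := w.map (SimpleGraph.Embedding.induce A).toHom with hw'def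
  set p2 := w'.bypass with hp2def
  have hp2 : p2.IsPath := w'.bypass_isPath
  have hp2A : ∀ x ∈ p2.support, x ∈ A := by
    intro x hx
    have hx' := w'.support_bypass_subset hx
    replace hx' := (congrArg (x ∈ ·) (Walk.support_map (SimpleGraph.Embedding.induce A).toHom w)).mp hx'
    obtain ⟨y, hy, rfl⟩ := List.mem_map.mp hx'
    exact y.2
  -- the image geodesic from γ u to γ v
  set p3 : G.Walk (γ u) (γ v) := (p1.map γ.toHom).reverse with hp3def
  have hp3 : p3.IsPath := (Walk.map_isPath_of_injective γ.toEquiv.injective hp1).reverse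
  have hlen3 : p3.length = G.dist v u := by
    rw [Walk.length_reverse, Walk.length_map, hlen1]
  -- p1 and p2 only share u
  have h12 : ∀ x ∈ p1.support, x ∈ p2.support → x = u := by
    intro x hx1 hx2
    have e1 := tree_dist_add hT hp1 hx1
    have e2 := hu.2 x (hp2A x hx2)
    rw [dcomm x u] at e1
    have : G.dist u x = 0 := by omega
    exact ((hc.dist_eq_zero_iff).mp this).symm
  set q12 := p1.append p2 with hq12def
  have hq12 : q12.IsPath := isPath_append' hp1 hp2 h12
  -- q12 and p3 only share γ u
  have h123 : ∀ x ∈ q12.support, x ∈ p3.support → x = γ u := by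
    intro x hx12 hx3
    have e3 := tree_dist_add hT hp3 hx3
    have hd3 : G.dist (γ u) (γ v) = G.dist v u := by rw [iso_dist, dcomm]
    rw [hd3] at e3
    rcases (Walk.mem_support_append_iff _ _).mp hx12 with hx1 | hx2
    · exfalso
      have e1 := tree_dist_add hT hp1 hx1
      have t1 := hc.dist_triangle (u := v) (v := x) (w := γ u)
      have t2 := hc.dist_triangle (u := γ v) (v := x) (w := u)
      have hvγu : G.dist v (γ u) = G.dist v u + G.dist u (γ u) := hu.2 (γ u) hγu
      have hγvu : G.dist (γ v) u = G.dist (γ v) (γ u) + G.dist (γ u) u := hgate2.2 u hu.1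
      rw [dcomm (γ v) (γ u), hd3] at hγvu
      rw [dcomm (γ v) x] at t2
      rw [dcomm (γ u) u] at hγvu
      rw [dcomm (γ u) x] at e3
      omega
    · have e2 := hgate2.2 x (hp2A x hx2)
      rw [dcomm (γ v) (γ u), hd3] at e2
      rw [dcomm x (γ v)] at e3
      have : G.dist (γ u) x = 0 := by omega
      exact ((hc.dist_eq_zero_iff).mp this).symm
  have hq : (q12.append p3).IsPath := isPath_append' hq12 hp3 h123
  have hlen : (q12.append p3).length = G.dist v (γ v) := tree_path_length hT _ hq
  have hlen2 : p2.length = G.dist u (γ u) := tree_path_length hT p2 hp2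
  rw [Walk.length_append, Walk.length_append, hlen1, hlen2, hlen3] at hlen
  rw [hinf]
  omega
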